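/- arXiv:2112.03196 — 3 statements merged into one kernel-verified Lean document; each statement's English description precedes it below -/
import Mathlib

section
/- The thresholds defined by α_t = α η γ̃_t + α ∑_{j≥1} δ^{t−ρ_j} γ_{t−ρ_j} satisfy, for every T ≥ 1, the oracle bound ∑_{t=1}^T δ^{T−t} α_t ≤ α · (R_δ(T) + η); equivalently the quantity P(T) = α(R_δ(T) + η) − ∑_{t=1}^T δ^{T−t} α_t is non-negative for all T. -/
/-- The time `ρ_j` of the `j`-th rejection: `min {t ≥ 0 : ∑_{i=1}^t R_i ≥ j}`,
equal to `⊤` (infinity) if no such time exists. -/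
noncomputable def rejTime (R : ℕ → ℝ) (j : ℕ) : ℕ∞ :=
  sInf {n : ℕ∞ | ∃ m : ℕ, n = (m : ℕ∞) ∧ (j : ℝ) ≤ ∑ i ∈ Finset.Icc 1 m, R i}

/-- The term `δ^{t−ρ} γ_{t−ρ}`, interpreted as `0` when `ρ = ∞`. -/
noncomputable def decayTerm (δ : ℝ) (γ : ℤ → ℝ) (t : ℕ) (ρ : ℕ∞) : ℝ :=
  ρ.recTopCoe 0 fun r => δ ^ (t - r) * γ ((t : ℤ) - (r : ℤ))

lemma rejTime_spec (R : ℕ → ℝ) (j : ℕ) :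
    rejTime R j = ⊤ ∨ ∃ r : ℕ, rejTime R j = (r : ℕ∞) ∧
      ((j : ℝ) ≤ ∑ i ∈ Finset.Icc 1 r, R i) ∧
      ∀ m : ℕ, m < r → ¬ ((j : ℝ) ≤ ∑ i ∈ Finset.Icc 1 m, R i) := by
  classical
  by_cases h : ∃ m : ℕ, (j : ℝ) ≤ ∑ i ∈ Finset.Icc 1 m, R i
  · right
    refine ⟨Nat.find h, ?_, Nat.find_spec h, fun m hm => Nat.find_min h hm⟩
    refine le_antisymm (sInf_le ⟨Nat.find h, rfl, Nat.find_spec h⟩) ?_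
    refine le_sInf ?_
    rintro n ⟨m, rfl, hm⟩
    exact_mod_cast Nat.find_min' h hm
  · left
    have he : {n : ℕ∞ | ∃ m : ℕ, n = (m : ℕ∞) ∧ (j : ℝ) ≤ ∑ i ∈ Finset.Icc 1 m, R i} = ∅ := by
      ext n
      simp only [Set.mem_setOf_eq, Set.mem_empty_iff_false, iff_false]
      rintro ⟨m, rfl, hm⟩
      exact h ⟨m, hm⟩
    rw [rejTime, he, sInf_empty]

/-- The memory-decay LORD thresholds `α_t = α η γ̃_t + α ∑_{j≥1} δ^{t−ρ_j} γ_{t−ρ_j}`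
satisfy the oracle bound `∑_{t=1}^T δ^{T−t} α_t ≤ α (R_δ(T) + η)` for every `T ≥ 1`. -/
theorem lord_decay_oracle_bound (δ α η : ℝ)
    (hδ : δ ∈ Set.Ioc (0 : ℝ) 1) (hα : α ∈ Set.Ioo (0 : ℝ) 1) (hη : 0 < η)
    (γ : ℤ → ℝ) (hγ_nonneg : ∀ t, 0 ≤ γ t) (hγ_zero : ∀ t : ℤ, t ≤ 0 → γ t = 0)
    (hγ_anti : ∀ s t : ℤ, 1 ≤ s → s ≤ t → γ t ≤ γ s)
    (hγ_sum : ∀ T : ℕ, ∑ t ∈ Finset.Icc 1 T, γ (t : ℤ) ≤ 1)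
    (γ' : ℕ → ℝ) (hγ'_pos : ∀ t, 1 ≤ t → 0 < γ' t)
    (hγ'_anti : ∀ s t : ℕ, 1 ≤ s → s ≤ t → γ' t ≤ γ' s)
    (hγ'_sum : ∀ T : ℕ, 1 ≤ T → ∑ t ∈ Finset.Icc 1 T, δ ^ (T - t) * γ' t ≤ 1)
    (R : ℕ → ℝ) (hR : ∀ t, R t = 0 ∨ R t = 1)
    (A : ℕ → ℝ)
    (hA : ∀ t : ℕ, A t = α * η * γ' t + α * ∑' j : ℕ, decayTerm δ γ t (rejTime R (j + 1)))
    (T : ℕ) (hT : 1 ≤ T) :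
    ∑ t ∈ Finset.Icc 1 T, δ ^ (T - t) * A t
      ≤ α * ((∑ t ∈ Finset.Icc 1 T, δ ^ (T - t) * R t) + η) := by
    classical
  obtain ⟨hδ0, hδ1⟩ := hδ
  obtain ⟨hα0, hα1⟩ := hα
  have hδpow : ∀ n : ℕ, 0 ≤ δ ^ n := fun n => pow_nonneg hδ0.le n
  have hR0 : ∀ t, 0 ≤ R t := fun t => by rcases hR t with h | h <;> simp [h]
  have hR1 : ∀ t, R t ≤ 1 := fun t => by rcases hR t with h | h <;> simp [h]
  set f : ℕ → ℕ → ℝ := fun t j => decayTerm δ γ t (rejTime R (j + 1)) with hfdef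
  -- split a sum at the top
  have hsplit : ∀ r : ℕ, 1 ≤ r →
      ∑ i ∈ Finset.Icc 1 r, R i = ∑ i ∈ Finset.Icc 1 (r - 1), R i + R r := by
    intro r hr
    obtain ⟨m, rfl⟩ : ∃ m, r = m + 1 := ⟨r - 1, by omega⟩
    rw [Finset.sum_Icc_succ_top (by omega)]
    simp
  -- finite rejection times are at least j+1
  have hge : ∀ j r : ℕ, rejTime R (j + 1) = (r : ℕ∞) → j + 1 ≤ r := by
    intro j r hr
    rcases rejTime_spec R (j + 1) with h | ⟨r', hr', hmem, _⟩
    · rw [h] at hr; exact absurd hr (by simp)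
    · rw [hr'] at hr
      have hrr : r' = r := by exact_mod_cast hr
      have h1 : ∑ i ∈ Finset.Icc 1 r', R i ≤ (r' : ℝ) := by
        calc ∑ i ∈ Finset.Icc 1 r', R i ≤ ∑ _i ∈ Finset.Icc 1 r', (1 : ℝ) :=
              Finset.sum_le_sum fun i _ => hR1 i
          _ = (r' : ℝ) := by simp [Nat.card_Icc]
      have h2 : ((j + 1 : ℕ) : ℝ) ≤ (r' : ℝ) := hmem.trans h1
      have h3 : j + 1 ≤ r' := by exact_mod_cast h2
      omega
  have hfzero : ∀ t j : ℕ, t ≤ j + 1 → f t j = 0 := by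
    intro t j htj
    rcases rejTime_spec R (j + 1) with h | ⟨r, hr, _, _⟩
    · simp [hfdef, h, decayTerm]
    · have hr' : j + 1 ≤ r := hge j r hr
      have hz : γ ((t : ℤ) - (r : ℤ)) = 0 := hγ_zero _ (by omega)
      simp [hfdef, hr, decayTerm, hz]
  have htsum : ∀ t : ℕ, t ≤ T → (∑' j : ℕ, f t j) = ∑ j ∈ Finset.range T, f t j := by
    intro t ht
    exact tsum_eq_sum fun j hj => hfzero t j (by simp only [Finset.mem_range, not_lt] at hj; omega)
  -- shifted gamma sums are at most one
  have hshift : ∀ r : ℕ, 1 ≤ r → r ≤ T →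
      ∑ t ∈ Finset.Icc 1 T, γ ((t : ℤ) - (r : ℤ)) ≤ 1 := by
    intro r hr hrT
    have h1 : ∑ t ∈ Finset.Icc 1 T, γ ((t : ℤ) - (r : ℤ))
        = ∑ t ∈ Finset.Icc (r + 1) T, γ ((t : ℤ) - (r : ℤ)) := by
      symm
      apply Finset.sum_subset
      · intro x hx; simp only [Finset.mem_Icc] at *; omega
      · intro x hx hx'
        apply hγ_zero
        simp only [Finset.mem_Icc] at hx hx'
        omega
    have h2 : ∑ t ∈ Finset.Icc (r + 1) T, γ ((t : ℤ) - (r : ℤ))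
        = ∑ s ∈ Finset.Icc 1 (T - r), γ (s : ℤ) := by
      have hmap : (Finset.Icc 1 (T - r)).map (addRightEmbedding r) = Finset.Icc (r + 1) T := by
        rw [Finset.map_add_right_Icc]
        congr 1 <;> omega
      rw [← hmap, Finset.sum_map]
      apply Finset.sum_congr rfl
      intro s hs
      simp only [addRightEmbedding_apply]
      congr 1
      push_cast
      ring
    rw [h1, h2]
    exact hγ_sum (T - r)
  -- per-rejection inner bound
  have hinner : ∀ j r : ℕ, rejTime R (j + 1) = (r : ℕ∞) → 1 ≤ r → r ≤ T →
      ∑ t ∈ Finset.Icc 1 T, δ ^ (T - t) * f t j ≤ δ ^ (T - r) := by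
    intro j r hr hr1 hrT
    have step : ∀ t ∈ Finset.Icc 1 T,
        δ ^ (T - t) * f t j ≤ δ ^ (T - r) * γ ((t : ℤ) - (r : ℤ)) := by
      intro t ht
      simp only [Finset.mem_Icc] at ht
      have hft : f t j = δ ^ (t - r) * γ ((t : ℤ) - (r : ℤ)) := by
        simp [hfdef, hr, decayTerm]
      rw [hft]
      rcases le_or_gt t r with h | h
      · have hz : γ ((t : ℤ) - (r : ℤ)) = 0 := hγ_zero _ (by omega)
        rw [hz]; simp
      · have hexp : T - t + (t - r) = T - r := by omega
        rw [← mul_assoc, ← pow_add, hexp]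
    calc ∑ t ∈ Finset.Icc 1 T, δ ^ (T - t) * f t j
        ≤ ∑ t ∈ Finset.Icc 1 T, δ ^ (T - r) * γ ((t : ℤ) - (r : ℤ)) :=
          Finset.sum_le_sum step
      _ = δ ^ (T - r) * ∑ t ∈ Finset.Icc 1 T, γ ((t : ℤ) - (r : ℤ)) := by
          rw [Finset.mul_sum]
      _ ≤ δ ^ (T - r) * 1 :=
          mul_le_mul_of_nonneg_left (hshift r hr1 hrT) (hδpow _)
      _ = δ ^ (T - r) := mul_one _
  -- rejections after time T (or never) contribute nothing
  have houter0 : ∀ j : ℕ, (∀ r : ℕ, rejTime R (j + 1) = (r : ℕ∞) → ¬ r ≤ T) →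
      ∑ t ∈ Finset.Icc 1 T, δ ^ (T - t) * f t j = 0 := by
    intro j hjr
    apply Finset.sum_eq_zero
    intro t ht
    simp only [Finset.mem_Icc] at ht
    rcases rejTime_spec R (j + 1) with h | ⟨r, hr, _, _⟩
    · simp [hfdef, h, decayTerm]
    · have hTr : T < r := by by_contra h'; exact hjr r hr (by omega)
      have hz : γ ((t : ℤ) - (r : ℤ)) = 0 := hγ_zero _ (by omega)
      simp [hfdef, hr, decayTerm, hz]
  set S : Finset ℕ := (Finset.range T).filter (fun j => rejTime R (j + 1) ≤ (T : ℕ∞)) with hS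
  set g : ℕ → ℕ := fun j => (rejTime R (j + 1)).toNat with hg
  have hSspec : ∀ j ∈ S, rejTime R (j + 1) = ((g j : ℕ) : ℕ∞) ∧ 1 ≤ g j ∧ g j ≤ T ∧
      R (g j) = 1 ∧ (((j + 1 : ℕ) : ℝ) ≤ ∑ i ∈ Finset.Icc 1 (g j), R i) ∧
      ∀ m : ℕ, m < g j → ¬ (((j + 1 : ℕ) : ℝ) ≤ ∑ i ∈ Finset.Icc 1 m, R i) := by
    intro j hj
    simp only [hS, Finset.mem_filter] at hj
    obtain ⟨hjT, hle⟩ := hj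
    rcases rejTime_spec R (j + 1) with h | ⟨r, hr, hmem, hmin⟩
    · rw [h] at hle; exact absurd hle (by simp)
    · have hgr : g j = r := by rw [hg]; simp [hr]
      rw [hgr]
      have hr1 : 1 ≤ r := by have := hge j r hr; omega
      have hrT : r ≤ T := by
        rw [hr] at hle; exact_mod_cast hle
      have hRr : R r = 1 := by
        rcases hR r with h0 | h1
        · exfalso
          apply hmin (r - 1) (by omega)
          have := hsplit r hr1
          rw [h0, add_zero] at this
          rw [← this]
          exact hmem
        · exact h1
      exact ⟨hr, hr1, hrT, hRr, hmem, hmin⟩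
  have hginj : ∀ j1 ∈ S, ∀ j2 ∈ S, g j1 = g j2 → j1 = j2 := by
    have key : ∀ j1 ∈ S, ∀ j2 ∈ S, j1 < j2 → g j1 ≠ g j2 := by
      intro j1 hj1 j2 hj2 hlt heq
      obtain ⟨_, hr1, _, _, _, hmin1⟩ := hSspec j1 hj1
      obtain ⟨_, _, _, _, hmem2, _⟩ := hSspec j2 hj2
      rw [← heq] at hmem2
      have h1 : ∑ i ∈ Finset.Icc 1 (g j1 - 1), R i < ((j1 + 1 : ℕ) : ℝ) := by
        have := hmin1 (g j1 - 1) (by omega)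
        linarith [not_le.mp this]
      have h2 := hsplit (g j1) hr1
      have h3 : ((j1 : ℝ) + 1) + 1 ≤ ((j2 : ℝ) + 1) := by
        have : (j1 : ℝ) + 1 ≤ (j2 : ℝ) := by exact_mod_cast Nat.succ_le_of_lt hlt
        linarith
      push_cast at hmem2 h1 h3
      have := hR1 (g j1)
      linarith
    intro j1 hj1 j2 hj2 heq
    rcases lt_trichotomy j1 j2 with h | h | h
    · exact absurd heq (key j1 hj1 j2 hj2 h)
    · exact h
    · exact absurd heq.symm (key j2 hj2 j1 hj1 h)
  have hS2 : ∑ j ∈ Finset.range T, ∑ t ∈ Finset.Icc 1 T, δ ^ (T - t) * f t j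
      ≤ ∑ t ∈ Finset.Icc 1 T, δ ^ (T - t) * R t := by
    have h1 : ∑ j ∈ Finset.range T, ∑ t ∈ Finset.Icc 1 T, δ ^ (T - t) * f t j
        = ∑ j ∈ S, ∑ t ∈ Finset.Icc 1 T, δ ^ (T - t) * f t j := by
      symm
      apply Finset.sum_subset (Finset.filter_subset _ _)
      intro j hj hjS
      apply houter0
      intro r hr hrT
      exact hjS (Finset.mem_filter.mpr ⟨hj, by rw [hr]; exact_mod_cast hrT⟩)
    have h2 : ∑ j ∈ S, ∑ t ∈ Finset.Icc 1 T, δ ^ (T - t) * f t j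
        ≤ ∑ j ∈ S, δ ^ (T - g j) * R (g j) := by
      apply Finset.sum_le_sum
      intro j hj
      obtain ⟨hr, hr1, hrT, hRr, _, _⟩ := hSspec j hj
      rw [hRr, mul_one]
      exact hinner j (g j) hr hr1 hrT
    have h3 : ∑ j ∈ S, δ ^ (T - g j) * R (g j)
        = ∑ t ∈ S.image g, δ ^ (T - t) * R t :=
      (Finset.sum_image (f := fun t => δ ^ (T - t) * R t) hginj).symm
    have h4 : S.image g ⊆ Finset.Icc 1 T := by
      intro t ht
      obtain ⟨j, hj, rfl⟩ := Finset.mem_image.mp ht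
      obtain ⟨_, hr1, hrT, _, _, _⟩ := hSspec j hj
      exact Finset.mem_Icc.mpr ⟨hr1, hrT⟩
    calc ∑ j ∈ Finset.range T, ∑ t ∈ Finset.Icc 1 T, δ ^ (T - t) * f t j
        = ∑ j ∈ S, ∑ t ∈ Finset.Icc 1 T, δ ^ (T - t) * f t j := h1
      _ ≤ ∑ j ∈ S, δ ^ (T - g j) * R (g j) := h2
      _ = ∑ t ∈ S.image g, δ ^ (T - t) * R t := h3
      _ ≤ ∑ t ∈ Finset.Icc 1 T, δ ^ (T - t) * R t :=
          Finset.sum_le_sum_of_subset_of_nonneg h4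
            (fun t _ _ => mul_nonneg (hδpow _) (hR0 t))
  -- assemble
  have hmain : ∑ t ∈ Finset.Icc 1 T, δ ^ (T - t) * A t
      = α * η * (∑ t ∈ Finset.Icc 1 T, δ ^ (T - t) * γ' t)
        + α * ∑ j ∈ Finset.range T, ∑ t ∈ Finset.Icc 1 T, δ ^ (T - t) * f t j := by
    have e1 : ∀ t ∈ Finset.Icc 1 T, δ ^ (T - t) * A t
        = α * η * (δ ^ (T - t) * γ' t) + α * ∑ j ∈ Finset.range T, δ ^ (T - t) * f t j := by
      intro t ht
      simp only [Finset.mem_Icc] at ht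
      have hms : ∑ j ∈ Finset.range T, δ ^ (T - t) * f t j
          = δ ^ (T - t) * ∑ j ∈ Finset.range T, f t j := by rw [Finset.mul_sum]
      rw [hA t, htsum t ht.2, hms]
      ring
    calc ∑ t ∈ Finset.Icc 1 T, δ ^ (T - t) * A t
        = ∑ t ∈ Finset.Icc 1 T, (α * η * (δ ^ (T - t) * γ' t)
            + α * ∑ j ∈ Finset.range T, δ ^ (T - t) * f t j) := Finset.sum_congr rfl e1
      _ = α * η * (∑ t ∈ Finset.Icc 1 T, δ ^ (T - t) * γ' t)
            + α * ∑ t ∈ Finset.Icc 1 T, ∑ j ∈ Finset.range T, δ ^ (T - t) * f t j := by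
          rw [Finset.sum_add_distrib, Finset.mul_sum, Finset.mul_sum]
      _ = α * η * (∑ t ∈ Finset.Icc 1 T, δ ^ (T - t) * γ' t)
            + α * ∑ j ∈ Finset.range T, ∑ t ∈ Finset.Icc 1 T, δ ^ (T - t) * f t j := by
          rw [Finset.sum_comm]
  rw [hmain]
  have hb1 : α * η * (∑ t ∈ Finset.Icc 1 T, δ ^ (T - t) * γ' t) ≤ α * η :=
    (mul_le_iff_le_one_right (by positivity)).mpr (hγ'_sum T hT)
  have hb2 : α * ∑ j ∈ Finset.range T, ∑ t ∈ Finset.Icc 1 T, δ ^ (T - t) * f t j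
      ≤ α * ∑ t ∈ Finset.Icc 1 T, δ ^ (T - t) * R t :=
    mul_le_mul_of_nonneg_left hS2 hα0.le
  have := add_le_add hb1 hb2
  linarith [this]
end

section
/- For any lag L ∈ ℕ, the thresholds defined by α_t = α η γ̃_t + α ∑_{j≥1} δ^{t−ρ_j} γ_{t−ρ_j−L} satisfy, for every T ≥ 1, the oracle bound ∑_{t=1}^T δ^{T−t} α_t ≤ α · (R_δ(T) + η); equivalently the quantity P(T) = α(R_δ(T) + η) − ∑_{t=1}^T δ^{T−t} α_t is non-negative for all T. -/
/-- The term `δ^{t−ρ} γ_{t−ρ−L}`, interpreted as `0` when `ρ = ∞`. -/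
noncomputable def decayTermL (δ : ℝ) (γ : ℤ → ℝ) (L t : ℕ) (ρ : ℕ∞) : ℝ :=
  ρ.recTopCoe 0 fun r => δ ^ (t - r) * γ ((t : ℤ) - (r : ℤ) - (L : ℤ))

lemma decayTermL_coe (δ : ℝ) (γ : ℤ → ℝ) (L t r : ℕ) :
    decayTermL δ γ L t (r : ℕ∞) = δ ^ (t - r) * γ ((t : ℤ) - (r : ℤ) - (L : ℤ)) := rfl

lemma decayTermL_top (δ : ℝ) (γ : ℤ → ℝ) (L t : ℕ) : decayTermL δ γ L t ⊤ = 0 := rfl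

lemma rejTime_mem {R : ℕ → ℝ} {j r : ℕ} (h : rejTime R j = (r : ℕ∞)) :
    (j : ℝ) ≤ ∑ i ∈ Finset.Icc 1 r, R i := by
  have hne : {n : ℕ∞ | ∃ m : ℕ, n = (m : ℕ∞) ∧
      (j : ℝ) ≤ ∑ i ∈ Finset.Icc 1 m, R i}.Nonempty := by
    by_contra hc
    rw [Set.not_nonempty_iff_eq_empty] at hc
    rw [rejTime, hc, sInf_empty] at h
    exact (WithTop.coe_ne_top (a := r)) h.symm
  have hmem := csInf_mem hne
  rw [← rejTime, h] at hmem
  obtain ⟨m, hm, hle⟩ := hmem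
  have : r = m := by exact_mod_cast hm
  rwa [this]

lemma rejTime_le {R : ℕ → ℝ} {j m : ℕ} (hm : (j : ℝ) ≤ ∑ i ∈ Finset.Icc 1 m, R i) :
    rejTime R j ≤ (m : ℕ∞) :=
  sInf_le ⟨m, rfl, hm⟩

/-- For any lag `L`, the thresholds `α_t = α η γ̃_t + α ∑_{j≥1} δ^{t−ρ_j} γ_{t−ρ_j−L}`
satisfy the oracle bound `∑_{t=1}^T δ^{T−t} α_t ≤ α (R_δ(T) + η)` for every `T ≥ 1`. -/
theorem lord_decay_local_dependency_oracle_bound (δ α η : ℝ) (L : ℕ)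
    (hδ : δ ∈ Set.Ioc (0 : ℝ) 1) (hα : α ∈ Set.Ioo (0 : ℝ) 1) (hη : 0 < η)
    (γ : ℤ → ℝ) (hγ_nonneg : ∀ t, 0 ≤ γ t) (hγ_zero : ∀ t : ℤ, t ≤ 0 → γ t = 0)
    (hγ_anti : ∀ s t : ℤ, 1 ≤ s → s ≤ t → γ t ≤ γ s)
    (hγ_sum : ∀ T : ℕ, ∑ t ∈ Finset.Icc 1 T, γ (t : ℤ) ≤ 1)
    (γ' : ℕ → ℝ) (hγ'_pos : ∀ t, 1 ≤ t → 0 < γ' t)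
    (hγ'_anti : ∀ s t : ℕ, 1 ≤ s → s ≤ t → γ' t ≤ γ' s)
    (hγ'_sum : ∀ T : ℕ, 1 ≤ T → ∑ t ∈ Finset.Icc 1 T, δ ^ (T - t) * γ' t ≤ 1)
    (R : ℕ → ℝ) (hR : ∀ t, R t = 0 ∨ R t = 1)
    (A : ℕ → ℝ)
    (hA : ∀ t : ℕ,
      A t = α * η * γ' t + α * ∑' j : ℕ, decayTermL δ γ L t (rejTime R (j + 1)))
    (T : ℕ) (hT : 1 ≤ T) :
    ∑ t ∈ Finset.Icc 1 T, δ ^ (T - t) * A t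
      ≤ α * ((∑ t ∈ Finset.Icc 1 T, δ ^ (T - t) * R t) + η) := by
  classical
  obtain ⟨hδ0, hδ1⟩ := hδ
  obtain ⟨hα0, hα1⟩ := hα
  have hR0 : ∀ t, 0 ≤ R t := fun t => by rcases hR t with h | h <;> simp [h]
  have hR1 : ∀ t, R t ≤ 1 := fun t => by rcases hR t with h | h <;> simp [h]
  set S : ℕ → ℝ := fun m => ∑ i ∈ Finset.Icc 1 m, R i with hSdef
  have hSmono : ∀ a b : ℕ, a ≤ b → S a ≤ S b := fun a b hab =>
    Finset.sum_le_sum_of_subset_of_nonneg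
      (Finset.Icc_subset_Icc_right hab) (fun i _ _ => hR0 i)
  have hSle : ∀ m : ℕ, S m ≤ m := by
    intro m
    calc S m ≤ ∑ i ∈ Finset.Icc 1 m, 1 := Finset.sum_le_sum fun i _ => hR1 i
      _ = m := by simp
  -- key facts about finite rejection times
  have key : ∀ j r : ℕ, rejTime R (j + 1) = (r : ℕ∞) →
      ((j : ℝ) + 1 ≤ S r ∧ S r < (j : ℝ) + 2) ∧ (j + 1 ≤ r ∧ R r = 1) := by
    intro j r h
    have h1 : (j : ℝ) + 1 ≤ S r := by
      have := rejTime_mem h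
      push_cast at this
      linarith
    have hjr : j + 1 ≤ r := by
      have := h1.trans (hSle r)
      exact_mod_cast (by push_cast; linarith : ((j : ℝ) + 1) ≤ (r : ℝ))
    obtain ⟨m, rfl⟩ : ∃ m, r = m + 1 := ⟨r - 1, by omega⟩
    have h2 : S m < (j : ℝ) + 1 := by
      by_contra hc
      push_neg at hc
      have hle := rejTime_le (j := j + 1) (m := m) (by push_cast at hc ⊢; linarith)
      rw [h] at hle
      have : m + 1 ≤ m := by exact_mod_cast hle
      omega
    have hsplit : S (m + 1) = S m + R (m + 1) := by
      rw [hSdef]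
      exact Finset.sum_Icc_succ_top (by omega) R
    have hRr : R (m + 1) = 1 := by
      rcases hR (m + 1) with h0 | h1'
      · rw [hsplit, h0, add_zero] at h1; linarith
      · exact h1'
    refine ⟨⟨h1, ?_⟩, ⟨hjr, hRr⟩⟩
    rw [hsplit, hRr]
    linarith
  -- strict monotonicity of finite rejection times
  have hstrict : ∀ j j' r r' : ℕ, j < j' → rejTime R (j + 1) = (r : ℕ∞) →
      rejTime R (j' + 1) = (r' : ℕ∞) → r < r' := by
    intro j j' r r' hjj h h'
    obtain ⟨⟨_, h2⟩, _⟩ := key j r h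
    obtain ⟨⟨h1', _⟩, _⟩ := key j' r' h'
    by_contra hc
    push_neg at hc
    have hmono := hSmono r' r hc
    have : (j : ℝ) + 2 ≤ (j' : ℝ) + 1 := by
      have : (j : ℝ) + 1 ≤ (j' : ℝ) := by exact_mod_cast hjj
      linarith
    linarith
  -- reduce the tsum to a finite sum
  have htsum : ∀ t ∈ Finset.Icc 1 T,
      (∑' j : ℕ, decayTermL δ γ L t (rejTime R (j + 1)))
        = ∑ j ∈ Finset.range T, decayTermL δ γ L t (rejTime R (j + 1)) := by
    intro t ht
    have htT := (Finset.mem_Icc.mp ht).2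
    apply tsum_eq_sum
    intro j hj
    rw [Finset.mem_range, not_lt] at hj
    rcases eq_top_or_lt_top (rejTime R (j + 1)) with htop | hlt
    · rw [htop, decayTermL_top]
    · have hr : ((rejTime R (j + 1)).toNat : ℕ∞) = rejTime R (j + 1) := ENat.coe_toNat hlt.ne
      set r := (rejTime R (j + 1)).toNat with hrdef
      obtain ⟨_, hjr, _⟩ := key j r hr.symm
      rw [← hr, decayTermL_coe, hγ_zero _ (by omega), mul_zero]
  -- per-rejection bound
  have hinner : ∀ j r : ℕ, rejTime R (j + 1) = (r : ℕ∞) → r ≤ T →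
      ∑ t ∈ Finset.Icc 1 T, δ ^ (T - t) * decayTermL δ γ L t ((r : ℕ∞))
        ≤ δ ^ (T - r) * R r := by
    intro j r hr hrT
    obtain ⟨_, ⟨hjr, hRr⟩⟩ := key j r hr
    rw [hRr, mul_one]
    simp_rw [decayTermL_coe]
    have hsub : Finset.Icc (r + L + 1) T ⊆ Finset.Icc 1 T := by
      intro x hx; rw [Finset.mem_Icc] at *; omega
    rw [← Finset.sum_subset hsub (by
      intro x hx hnx
      rw [Finset.mem_Icc] at hx hnx
      push_neg at hnx
      rw [hγ_zero _ (by omega), mul_zero, mul_zero])]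
    have heq : ∀ x ∈ Finset.Icc (r + L + 1) T,
        δ ^ (T - x) * (δ ^ (x - r) * γ ((x : ℤ) - r - L))
          = δ ^ (T - r) * γ ((x : ℤ) - r - L) := by
      intro x hx
      rw [Finset.mem_Icc] at hx
      rw [← mul_assoc, ← pow_add]
      congr 2
      omega
    rw [Finset.sum_congr rfl heq, ← Finset.mul_sum]
    have hb : ∑ x ∈ Finset.Icc (r + L + 1) T, γ ((x : ℤ) - r - L) ≤ 1 := by
      refine le_trans (le_of_eq ?_) (hγ_sum (T - (r + L)))
      refine Finset.sum_nbij' (fun x => x - (r + L)) (fun s => s + (r + L)) ?_ ?_ ?_ ?_ ?_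
      · intro a ha; simp only [Finset.mem_Icc] at ha ⊢; omega
      · intro a ha; simp only [Finset.mem_Icc] at ha ⊢; omega
      · intro a ha; simp only [Finset.mem_Icc] at ha ⊢; omega
      · intro a ha; simp only [Finset.mem_Icc] at ha ⊢; omega
      · intro a ha
        rw [Finset.mem_Icc] at ha
        congr 1
        push_cast [Nat.cast_sub (by omega : r + L ≤ a)]
        ring
    calc δ ^ (T - r) * ∑ x ∈ Finset.Icc (r + L + 1) T, γ ((x : ℤ) - r - L)
        ≤ δ ^ (T - r) * 1 := mul_le_mul_of_nonneg_left hb (pow_nonneg hδ0.le _)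
      _ = δ ^ (T - r) := mul_one _
  -- the rejection-sum bound
  set rfun : ℕ → ℕ := fun j => (rejTime R (j + 1)).toNat with hrfun
  set J : Finset ℕ := (Finset.range T).filter
    (fun j => rejTime R (j + 1) ≠ ⊤ ∧ (rejTime R (j + 1)).toNat ≤ T) with hJdef
  have hJr : ∀ j ∈ J, rejTime R (j + 1) = ((rfun j : ℕ) : ℕ∞) := by
    intro j hj
    rw [hJdef, Finset.mem_filter] at hj
    exact (ENat.coe_toNat hj.2.1).symm
  have main2 : ∑ j ∈ Finset.range T,
      ∑ t ∈ Finset.Icc 1 T, δ ^ (T - t) * decayTermL δ γ L t (rejTime R (j + 1))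
        ≤ ∑ t ∈ Finset.Icc 1 T, δ ^ (T - t) * R t := by
    have hz : ∀ j ∈ Finset.range T, j ∉ J →
        ∑ t ∈ Finset.Icc 1 T, δ ^ (T - t) * decayTermL δ γ L t (rejTime R (j + 1)) = 0 := by
      intro j hj hnj
      rw [hJdef, Finset.mem_filter] at hnj
      push_neg at hnj
      rcases eq_top_or_lt_top (rejTime R (j + 1)) with htop | hlt
      · simp [htop, decayTermL_top]
      · have hr : ((rejTime R (j + 1)).toNat : ℕ∞) = rejTime R (j + 1) := ENat.coe_toNat hlt.ne
        set r := (rejTime R (j + 1)).toNat with hrdef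
        have hrT : T < r := hnj hj hlt.ne
        apply Finset.sum_eq_zero
        intro t ht
        rw [Finset.mem_Icc] at ht
        rw [← hr, decayTermL_coe, hγ_zero _ (by omega), mul_zero, mul_zero]
    rw [← Finset.sum_subset (Finset.filter_subset _ _) hz]
    have step : ∑ j ∈ J,
        ∑ t ∈ Finset.Icc 1 T, δ ^ (T - t) * decayTermL δ γ L t (rejTime R (j + 1))
          ≤ ∑ j ∈ J, δ ^ (T - rfun j) * R (rfun j) := by
      apply Finset.sum_le_sum
      intro j hj
      have hr := hJr j hj
      have hjJ := hj
      rw [hJdef, Finset.mem_filter] at hjJ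
      have hrT : rfun j ≤ T := hjJ.2.2
      calc ∑ t ∈ Finset.Icc 1 T, δ ^ (T - t) * decayTermL δ γ L t (rejTime R (j + 1))
          = ∑ t ∈ Finset.Icc 1 T, δ ^ (T - t) * decayTermL δ γ L t ((rfun j : ℕ∞)) := by
            rw [← hr]
        _ ≤ δ ^ (T - rfun j) * R (rfun j) := hinner j (rfun j) hr hrT
    refine step.trans ?_
    have hinj : ∀ x ∈ J, ∀ y ∈ J, rfun x = rfun y → x = y := by
      intro x hx y hy hxy
      by_contra hne
      rcases Nat.lt_or_ge x y with hlt | hge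
      · exact absurd (hstrict x y _ _ hlt (hJr x hx) (hJr y hy)) (by omega)
      · have : y < x := by omega
        exact absurd (hstrict y x _ _ this (hJr y hy) (hJr x hx)) (by omega)
    calc ∑ j ∈ J, δ ^ (T - rfun j) * R (rfun j)
        = ∑ t ∈ J.image rfun, δ ^ (T - t) * R t :=
          (Finset.sum_image (f := fun t => δ ^ (T - t) * R t) hinj).symm
      _ ≤ ∑ t ∈ Finset.Icc 1 T, δ ^ (T - t) * R t := ?_
    apply Finset.sum_le_sum_of_subset_of_nonneg
    · intro t ht
      rw [Finset.mem_image] at ht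
      obtain ⟨j, hj, rfl⟩ := ht
      have hjJ := hj
      rw [hJdef, Finset.mem_filter] at hjJ
      obtain ⟨_, hjr, _⟩ := key j (rfun j) (hJr j hj)
      rw [Finset.mem_Icc]
      exact ⟨by omega, hjJ.2.2⟩
    · intro t _ _
      exact mul_nonneg (pow_nonneg hδ0.le _) (hR0 t)
  -- first part bound
  have main1 : ∑ t ∈ Finset.Icc 1 T, δ ^ (T - t) * (α * η * γ' t) ≤ α * η := by
    have : ∑ t ∈ Finset.Icc 1 T, δ ^ (T - t) * (α * η * γ' t)
        = α * η * ∑ t ∈ Finset.Icc 1 T, δ ^ (T - t) * γ' t := by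
      rw [Finset.mul_sum]
      exact Finset.sum_congr rfl fun t _ => by ring
    rw [this]
    calc α * η * ∑ t ∈ Finset.Icc 1 T, δ ^ (T - t) * γ' t
        ≤ α * η * 1 := by
          apply mul_le_mul_of_nonneg_left (hγ'_sum T hT)
          positivity
      _ = α * η := mul_one _
  -- assemble
  have hexp : ∑ t ∈ Finset.Icc 1 T, δ ^ (T - t) * A t
      = (∑ t ∈ Finset.Icc 1 T, δ ^ (T - t) * (α * η * γ' t))
        + α * ∑ j ∈ Finset.range T,
            ∑ t ∈ Finset.Icc 1 T, δ ^ (T - t) * decayTermL δ γ L t (rejTime R (j + 1)) := by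
    have h1 : ∀ t ∈ Finset.Icc 1 T, δ ^ (T - t) * A t
        = δ ^ (T - t) * (α * η * γ' t)
          + δ ^ (T - t) * (α * ∑ j ∈ Finset.range T, decayTermL δ γ L t (rejTime R (j + 1))) := by
      intro t ht
      rw [hA t, htsum t ht]
      ring
    rw [Finset.sum_congr rfl h1, Finset.sum_add_distrib]
    congr 1
    calc ∑ t ∈ Finset.Icc 1 T,
            δ ^ (T - t) * (α * ∑ j ∈ Finset.range T, decayTermL δ γ L t (rejTime R (j + 1)))
        = ∑ t ∈ Finset.Icc 1 T, ∑ j ∈ Finset.range T,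
            α * (δ ^ (T - t) * decayTermL δ γ L t (rejTime R (j + 1))) := by
          refine Finset.sum_congr rfl fun t _ => ?_
          rw [Finset.mul_sum, Finset.mul_sum]
          exact Finset.sum_congr rfl fun j _ => by ring
      _ = ∑ j ∈ Finset.range T, ∑ t ∈ Finset.Icc 1 T,
            α * (δ ^ (T - t) * decayTermL δ γ L t (rejTime R (j + 1))) := Finset.sum_comm
      _ = α * ∑ j ∈ Finset.range T, ∑ t ∈ Finset.Icc 1 T,
            δ ^ (T - t) * decayTermL δ γ L t (rejTime R (j + 1)) := by
          rw [Finset.mul_sum]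
          exact Finset.sum_congr rfl fun j _ => (Finset.mul_sum _ _ _).symm
  calc ∑ t ∈ Finset.Icc 1 T, δ ^ (T - t) * A t
      = (∑ t ∈ Finset.Icc 1 T, δ ^ (T - t) * (α * η * γ' t))
        + α * ∑ j ∈ Finset.range T,
            ∑ t ∈ Finset.Icc 1 T, δ ^ (T - t) * decayTermL δ γ L t (rejTime R (j + 1)) := hexp
    _ ≤ α * η + α * ∑ t ∈ Finset.Icc 1 T, δ ^ (T - t) * R t :=
        add_le_add main1 (mul_le_mul_of_nonneg_left main2 hα0.le)
    _ = α * ((∑ t ∈ Finset.Icc 1 T, δ ^ (T - t) * R t) + η) := by ring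
end

section
/- The thresholds defined by α_t = [α (τ − λ) ( η γ̃_{S_0(t)} + ∑_{j≥1} δ^{t−ρ_j} γ_{S_j(t)} )] ∧ λ satisfy, for every T ≥ 1, the bound ∑_{t=1}^T δ^{T−t} α_t · 1{λ < p_t ≤ τ}/(τ − λ) ≤ α · (R_δ(T) + η). -/
open Classical in
/-- The number of candidate `p`-values `∑_{i=a}^b 1{λ < p_i ≤ τ}`. -/
noncomputable def candBetween (p : ℕ → ℝ) (lam tau : ℝ) (a b : ℕ) : ℕ :=
  ((Finset.Icc a b).filter fun i => lam < p i ∧ p i ≤ tau).card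

/-- The candidate count `S_0(t) = 1 + ∑_{i=1}^{t−1} 1{λ < p_i ≤ τ}` (with `ρ_0 = −∞`). -/
noncomputable def candCount0 (p : ℕ → ℝ) (lam tau : ℝ) (t : ℕ) : ℕ :=
  1 + candBetween p lam tau 1 (t - 1)

/-- The term `δ^{t−ρ_j} γ_{S_j(t)}` where
`S_j(t) = 1{t > ρ_j} + ∑_{i=ρ_j+1}^{t−1} 1{λ < p_i ≤ τ}`, interpreted as `0`
when `ρ_j = ∞`. -/
noncomputable def addisTerm (δ : ℝ) (γ : ℤ → ℝ) (p : ℕ → ℝ) (lam tau : ℝ)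
    (t : ℕ) (ρ : ℕ∞) : ℝ :=
  ρ.recTopCoe 0 fun r =>
    δ ^ (t - r) * γ ((if r < t then 1 else 0) + candBetween p lam tau (r + 1) (t - 1))

lemma candBetween_zero (p : ℕ → ℝ) (lam tau : ℝ) {a b : ℕ} (h : b < a) :
    candBetween p lam tau a b = 0 := by
  unfold candBetween
  rw [Finset.Icc_eq_empty (by omega)]
  simp

lemma candBetween_le (p : ℕ → ℝ) (lam tau : ℝ) (a b : ℕ) :
    candBetween p lam tau a b ≤ b + 1 - a := by
  unfold candBetween
  calc _ ≤ (Finset.Icc a b).card := Finset.card_filter_le _ _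
    _ = b + 1 - a := Nat.card_Icc a b

lemma candBetween_strict (p : ℕ → ℝ) (lam tau : ℝ) {a t t' : ℕ} (h1 : 1 ≤ a) (ha : a ≤ t)
    (htt : t < t') (hc : lam < p t ∧ p t ≤ tau) :
    candBetween p lam tau a (t-1) < candBetween p lam tau a (t'-1) := by
  unfold candBetween
  apply Finset.card_lt_card
  constructor
  · exact Finset.filter_subset_filter _ (Finset.Icc_subset_Icc_right (by omega))
  · intro hsub
    have := hsub (Finset.mem_filter.mpr ⟨Finset.mem_Icc.mpr ⟨ha, by omega⟩, hc⟩)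
    have := (Finset.mem_filter.mp this).1
    rw [Finset.mem_Icc] at this
    omega

lemma candBetween_succ (p : ℕ → ℝ) (lam tau : ℝ) {a b : ℕ} (h : a ≤ b + 1) :
    candBetween p lam tau a (b+1) =
      candBetween p lam tau a b + (if lam < p (b+1) ∧ p (b+1) ≤ tau then 1 else 0) := by
  classical
  have hins : Finset.Icc a (b+1) = insert (b+1) (Finset.Icc a b) := by
    ext x; simp [Finset.mem_Icc]; omega
  unfold candBetween
  rw [hins, Finset.filter_insert]
  split
  · rw [Finset.card_insert_of_notMem (by simp [Finset.mem_Icc])]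
  · simp

lemma gamma_candidate_sum (p : ℕ → ℝ) (lam tau : ℝ) (γ : ℤ → ℝ)
    (hγ_nonneg : ∀ t, 0 ≤ γ t)
    (hγ_sum : ∀ T : ℕ, ∑ t ∈ Finset.Icc 1 T, γ (t : ℤ) ≤ 1)
    (a T : ℕ) (ha : 1 ≤ a) :
    ∑ t ∈ (Finset.Icc a T).filter (fun t => lam < p t ∧ p t ≤ tau),
        γ (1 + (candBetween p lam tau a (t-1) : ℤ)) ≤ 1 := by
  classical
  set s := (Finset.Icc a T).filter (fun t => lam < p t ∧ p t ≤ tau) with hs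
  set g : ℕ → ℕ := fun t => 1 + candBetween p lam tau a (t-1) with hg
  have hmem : ∀ t ∈ s, (a ≤ t ∧ t ≤ T) ∧ (lam < p t ∧ p t ≤ tau) := by
    intro t ht
    rw [hs, Finset.mem_filter, Finset.mem_Icc] at ht
    exact ht
  have hinj : ∀ x ∈ s, ∀ y ∈ s, g x = g y → x = y := by
    intro x hx y hy hxy
    have hxy' : 1 + candBetween p lam tau a (x-1) = 1 + candBetween p lam tau a (y-1) := hxy
    by_contra hne
    rcases Nat.lt_or_ge x y with h | h
    · have := candBetween_strict p lam tau ha (hmem x hx).1.1 h (hmem x hx).2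
      omega
    · have hlt : y < x := by omega
      have := candBetween_strict p lam tau ha (hmem y hy).1.1 hlt (hmem y hy).2
      omega
  have hcast : ∀ t ∈ s, γ (1 + (candBetween p lam tau a (t-1) : ℤ)) = (fun k : ℕ => γ (k : ℤ)) (g t) := by
    intro t _; simp [hg]
  rw [Finset.sum_congr rfl hcast, ← Finset.sum_image (f := fun k : ℕ => γ (k : ℤ)) (g := g) hinj]
  have hsub : s.image g ⊆ Finset.Icc 1 T := by
    intro k hk
    rw [Finset.mem_image] at hk
    obtain ⟨t, ht, rfl⟩ := hk
    obtain ⟨hat, htT⟩ := (hmem t ht).1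
    have h2 := candBetween_le p lam tau a (t-1)
    simp only [Finset.mem_Icc, hg]
    omega
  calc ∑ k ∈ s.image g, γ (k : ℤ) ≤ ∑ k ∈ Finset.Icc 1 T, γ (k : ℤ) :=
        Finset.sum_le_sum_of_subset_of_nonneg hsub (fun i _ _ => hγ_nonneg _)
    _ ≤ 1 := hγ_sum T

lemma gammaP_candidate_sum (δ : ℝ) (hδ0 : 0 < δ) (hδ1 : δ ≤ 1) (p : ℕ → ℝ) (lam tau : ℝ)
    (γ' : ℕ → ℝ) (hpos : ∀ t, 1 ≤ t → 0 < γ' t)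
    (hsum : ∀ T : ℕ, 1 ≤ T → ∑ t ∈ Finset.Icc 1 T, δ ^ (T - t) * γ' t ≤ 1)
    (T : ℕ) :
    ∑ t ∈ Finset.Icc 1 T, (if lam < p t ∧ p t ≤ tau then
        δ ^ (T - t) * γ' (1 + candBetween p lam tau 1 (t-1)) else 0) ≤ 1 := by
  classical
  set G : ℕ → ℝ := fun K => ∑ s ∈ Finset.Icc 1 K, δ ^ (K - s) * γ' s with hG
  have hGnonneg : ∀ K, 0 ≤ G K := by
    intro K
    apply Finset.sum_nonneg
    intro i hi
    rw [Finset.mem_Icc] at hi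
    exact mul_nonneg (pow_nonneg hδ0.le _) (hpos i hi.1).le
  have hGrec : ∀ K, G (K + 1) = δ * G K + γ' (K+1) := by
    intro K
    simp only [hG]
    rw [Finset.sum_Icc_succ_top (by omega)]
    simp only [Nat.sub_self, pow_zero, one_mul]
    congr 1
    rw [Finset.mul_sum]
    apply Finset.sum_congr rfl
    intro i hi
    rw [Finset.mem_Icc] at hi
    rw [show K + 1 - i = (K - i) + 1 by omega, pow_succ]
    ring
  have hGle : ∀ K, G K ≤ 1 := by
    intro K
    rcases Nat.eq_zero_or_pos K with h | h
    · subst h; rw [hG]; simp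
    · exact hsum K h
  have key : ∀ T, ∑ t ∈ Finset.Icc 1 T, (if lam < p t ∧ p t ≤ tau then
      δ ^ (T - t) * γ' (1 + candBetween p lam tau 1 (t-1)) else 0)
      ≤ G (candBetween p lam tau 1 T) := by
    intro T
    induction T with
    | zero => simpa using hGnonneg (candBetween p lam tau 1 0)
    | succ T ih =>
      rw [Finset.sum_Icc_succ_top (by omega)]
      have hstep : ∑ t ∈ Finset.Icc 1 T, (if lam < p t ∧ p t ≤ tau then
          δ ^ (T + 1 - t) * γ' (1 + candBetween p lam tau 1 (t-1)) else 0)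
          = δ * ∑ t ∈ Finset.Icc 1 T, (if lam < p t ∧ p t ≤ tau then
          δ ^ (T - t) * γ' (1 + candBetween p lam tau 1 (t-1)) else 0) := by
        rw [Finset.mul_sum]
        apply Finset.sum_congr rfl
        intro t ht
        rw [Finset.mem_Icc] at ht
        rw [mul_ite, mul_zero]
        congr 1
        rw [show T + 1 - t = (T - t) + 1 by omega, pow_succ]
        ring
      rw [hstep, candBetween_succ p lam tau (by omega)]
      by_cases hc : lam < p (T+1) ∧ p (T+1) ≤ tau
      · rw [if_pos hc, if_pos hc, hGrec]
        have : (T + 1) - (T + 1) = 0 := by omega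
        rw [this, pow_zero, one_mul, show T + 1 - 1 = T from rfl]
        have h1 : δ * (∑ t ∈ Finset.Icc 1 T, (if lam < p t ∧ p t ≤ tau then
            δ ^ (T - t) * γ' (1 + candBetween p lam tau 1 (t-1)) else 0))
            ≤ δ * G (candBetween p lam tau 1 T) := by
          exact mul_le_mul_of_nonneg_left ih hδ0.le
        rw [add_comm 1 (candBetween p lam tau 1 T)] at *
        linarith
      · rw [if_neg hc, if_neg hc, add_zero, add_zero]
        calc δ * _ ≤ δ * G (candBetween p lam tau 1 T) := mul_le_mul_of_nonneg_left ih hδ0.le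
          _ ≤ 1 * G (candBetween p lam tau 1 T) :=
              mul_le_mul_of_nonneg_right hδ1 (hGnonneg _)
          _ = G (candBetween p lam tau 1 T) := one_mul _
  exact (key T).trans (hGle _)

lemma rejTime_le_sum (R : ℕ → ℝ) {j r : ℕ} (h : rejTime R j = (r : ℕ∞)) :
    (j : ℝ) ≤ ∑ i ∈ Finset.Icc 1 r, R i := by
  have hne : {n : ℕ∞ | ∃ m : ℕ, n = (m : ℕ∞) ∧ (j : ℝ) ≤ ∑ i ∈ Finset.Icc 1 m, R i}.Nonempty := by
    by_contra hc
    rw [Set.not_nonempty_iff_eq_empty] at hc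
    rw [rejTime, hc] at h
    simp at h
  have hmem := csInf_mem hne
  rw [← rejTime, h] at hmem
  obtain ⟨m, hm, hle⟩ := hmem
  have : m = r := by exact_mod_cast hm.symm
  rwa [this] at hle

lemma rejTime_min (R : ℕ → ℝ) {j r : ℕ} (h : rejTime R j = (r : ℕ∞)) {m : ℕ} (hm : m < r) :
    ∑ i ∈ Finset.Icc 1 m, R i < (j : ℝ) := by
  by_contra hc
  push_neg at hc
  have hmem : (m : ℕ∞) ∈ {n : ℕ∞ | ∃ m : ℕ, n = (m : ℕ∞) ∧ (j : ℝ) ≤ ∑ i ∈ Finset.Icc 1 m, R i} :=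
    ⟨m, rfl, hc⟩
  have := csInf_le (OrderBot.bddBelow _) hmem
  rw [← rejTime, h] at this
  exact absurd (by exact_mod_cast this) (by omega)

/-- The memory-decay ADDIS thresholds
`α_t = [α (τ−λ) (η γ̃_{S_0(t)} + ∑_{j≥1} δ^{t−ρ_j} γ_{S_j(t)})] ∧ λ`
satisfy `∑_{t=1}^T δ^{T−t} α_t 1{λ < p_t ≤ τ}/(τ−λ) ≤ α (R_δ(T) + η)` for every `T ≥ 1`. -/
theorem addis_decay_oracle_bound (δ α η lam tau : ℝ)
    (hδ : δ ∈ Set.Ioc (0 : ℝ) 1) (hα : α ∈ Set.Ioo (0 : ℝ) 1) (hη : 0 < η)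
    (hlam : 0 < lam) (hlamtau : lam < tau) (htau : tau < 1)
    (γ : ℤ → ℝ) (hγ_nonneg : ∀ t, 0 ≤ γ t) (hγ_zero : ∀ t : ℤ, t ≤ 0 → γ t = 0)
    (hγ_anti : ∀ s t : ℤ, 1 ≤ s → s ≤ t → γ t ≤ γ s)
    (hγ_sum : ∀ T : ℕ, ∑ t ∈ Finset.Icc 1 T, γ (t : ℤ) ≤ 1)
    (γ' : ℕ → ℝ) (hγ'_pos : ∀ t, 1 ≤ t → 0 < γ' t)
    (hγ'_anti : ∀ s t : ℕ, 1 ≤ s → s ≤ t → γ' t ≤ γ' s)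
    (hγ'_sum : ∀ T : ℕ, 1 ≤ T → ∑ t ∈ Finset.Icc 1 T, δ ^ (T - t) * γ' t ≤ 1)
    (p : ℕ → ℝ) (hp01 : ∀ t, p t ∈ Set.Icc (0 : ℝ) 1)
    (R : ℕ → ℝ) (hR : ∀ t, R t = 0 ∨ R t = 1)
    (A : ℕ → ℝ)
    (hA : ∀ t : ℕ,
      A t = min (α * (tau - lam) * (η * γ' (candCount0 p lam tau t)
              + ∑' j : ℕ, addisTerm δ γ p lam tau t (rejTime R (j + 1)))) lam)
    (T : ℕ) (hT : 1 ≤ T) :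
    ∑ t ∈ Finset.Icc 1 T,
        δ ^ (T - t) * A t * (if lam < p t ∧ p t ≤ tau then (1 : ℝ) else 0) / (tau - lam)
      ≤ α * ((∑ t ∈ Finset.Icc 1 T, δ ^ (T - t) * R t) + η) := by
  classical
  obtain ⟨hδ0, hδ1⟩ := hδ
  obtain ⟨hα0, hα1⟩ := hα
  have htl : 0 < tau - lam := by linarith
  -- basic facts about R sums
  have hR01 : ∀ t, 0 ≤ R t ∧ R t ≤ 1 := by
    intro t; rcases hR t with h | h <;> simp [h]
  have hsumR_le : ∀ m : ℕ, ∑ i ∈ Finset.Icc 1 m, R i ≤ (m : ℝ) := by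
    intro m
    calc ∑ i ∈ Finset.Icc 1 m, R i ≤ ∑ _i ∈ Finset.Icc 1 m, (1:ℝ) :=
          Finset.sum_le_sum (fun i _ => (hR01 i).2)
      _ = (m : ℝ) := by simp
  have hρ_ge : ∀ j r : ℕ, rejTime R (j+1) = (r : ℕ∞) → j + 1 ≤ r := by
    intro j r h
    have h1 := rejTime_le_sum R h
    have h2 := hsumR_le r
    have : ((j:ℝ) + 1) ≤ (r : ℝ) := by push_cast at h1; linarith
    exact_mod_cast this
  have haddis_coe : ∀ (t r : ℕ), addisTerm δ γ p lam tau t ((r : ℕ∞)) =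
      δ ^ (t - r) * γ ((if r < t then 1 else 0) + candBetween p lam tau (r + 1) (t - 1)) :=
    fun t r => rfl
  have hterm_zero : ∀ t r : ℕ, t ≤ r → addisTerm δ γ p lam tau t ((r : ℕ∞)) = 0 := by
    intro t r htr
    rw [haddis_coe, if_neg (by omega), candBetween_zero p lam tau (by omega)]
    rw [show ((0:ℤ) + ((0:ℕ):ℤ)) = 0 by norm_num, hγ_zero 0 le_rfl, mul_zero]
  have htsum : ∀ t, t ≤ T → (∑' j : ℕ, addisTerm δ γ p lam tau t (rejTime R (j+1)))
      = ∑ j ∈ Finset.range T, addisTerm δ γ p lam tau t (rejTime R (j+1)) := by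
    intro t ht
    apply tsum_eq_sum
    intro j hj
    rw [Finset.mem_range, not_lt] at hj
    cases hco : rejTime R (j+1) with
    | top => rfl
    | coe r =>
      have := hρ_ge j r hco
      exact hterm_zero t r (by omega)
  -- R r = 1 at each finite rejection time
  have hsum_split : ∀ r : ℕ, 1 ≤ r →
      ∑ i ∈ Finset.Icc 1 r, R i = ∑ i ∈ Finset.Icc 1 (r-1), R i + R r := by
    intro r hr
    have e : r - 1 + 1 = r := by omega
    have := Finset.sum_Icc_succ_top (a := 1) (b := r - 1) (by omega) R
    rwa [e] at this
  have hRat : ∀ j r : ℕ, rejTime R (j+1) = (r : ℕ∞) → R r = 1 := by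
    intro j r h
    have hr1 : 1 ≤ r := by have := hρ_ge j r h; omega
    have h1 := rejTime_le_sum R h
    have h2 := rejTime_min R h (m := r - 1) (by omega)
    rcases hR r with h0 | h0
    · exfalso
      rw [hsum_split r hr1, h0, add_zero] at h1
      linarith
    · exact h0
  have hdist : ∀ j j' r : ℕ, j < j' → rejTime R (j+1) = (r : ℕ∞) →
      rejTime R (j'+1) = (r : ℕ∞) → False := by
    intro j j' r hlt h h'
    have hr1 : 1 ≤ r := by have := hρ_ge j r h; omega
    have h1 := rejTime_le_sum R h'
    have h2 := rejTime_min R h (m := r - 1) (by omega)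
    have h3 := hsum_split r hr1
    have h4 := (hR01 r).2
    have h5 : ((j:ℝ)+1) + 1 ≤ ((j':ℝ)+1) := by
      have : (j:ℝ) + 1 ≤ (j' : ℝ) := by exact_mod_cast hlt
      linarith
    push_cast at h1 h2
    linarith
  -- the rejection-indexed set and map
  set J : Finset ℕ := (Finset.range T).filter (fun j => rejTime R (j+1) < (T : ℕ∞)) with hJdef
  set ρ : ℕ → ℕ := fun j => (rejTime R (j+1)).toNat with hρdef
  have hJco : ∀ j ∈ J, rejTime R (j+1) = ((ρ j : ℕ) : ℕ∞) := by
    intro j hj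
    rw [hJdef, Finset.mem_filter] at hj
    exact (ENat.coe_toNat (hj.2.trans_le le_top).ne).symm
  have hJlt : ∀ j ∈ J, ρ j < T := by
    intro j hj
    have hco := hJco j hj
    rw [hJdef, Finset.mem_filter] at hj
    have := hj.2
    rw [hco] at this
    exact_mod_cast this
  have hJ1 : ∀ j ∈ J, 1 ≤ ρ j := by
    intro j hj
    have := hρ_ge j (ρ j) (hJco j hj)
    omega
  -- the per-j inner bound
  have hInner : ∀ j ∈ Finset.range T,
      (∑ t ∈ Finset.Icc 1 T, (if lam < p t ∧ p t ≤ tau then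
          δ ^ (T - t) * addisTerm δ γ p lam tau t (rejTime R (j+1)) else 0))
      ≤ (if j ∈ J then δ ^ (T - ρ j) * R (ρ j) else 0) := by
    intro j _
    by_cases hJ : j ∈ J
    · rw [if_pos hJ, hRat j (ρ j) (hJco j hJ), mul_one]
      set r := ρ j with hrdef
      have hco := hJco j hJ
      have hrT : r < T := hJlt j hJ
      have hr1 : 1 ≤ r := hJ1 j hJ
      have hterm : ∀ t ∈ Finset.Icc 1 T, (if lam < p t ∧ p t ≤ tau then
          δ ^ (T - t) * addisTerm δ γ p lam tau t (rejTime R (j+1)) else 0)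
          = (if t ∈ (Finset.Icc (r+1) T).filter (fun t => lam < p t ∧ p t ≤ tau) then
              δ ^ (T - r) * γ (1 + (candBetween p lam tau (r+1) (t-1) : ℤ)) else 0) := by
        intro t ht
        rw [Finset.mem_Icc] at ht
        rw [hco, haddis_coe]
        by_cases hc : lam < p t ∧ p t ≤ tau
        · by_cases htr : r < t
          · rw [if_pos hc, if_pos htr,
              if_pos (by rw [Finset.mem_filter, Finset.mem_Icc]; exact ⟨⟨by omega, ht.2⟩, hc⟩)]
            rw [← mul_assoc, ← pow_add, show T - t + (t - r) = T - r by omega]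
          · rw [if_pos hc, if_neg htr,
              if_neg (by rw [Finset.mem_filter, Finset.mem_Icc]; omega)]
            rw [candBetween_zero p lam tau (by omega)]
            rw [show ((0:ℤ) + ((0:ℕ):ℤ)) = 0 by norm_num, hγ_zero 0 le_rfl, mul_zero, mul_zero]
        · rw [if_neg hc, if_neg (by rw [Finset.mem_filter]; tauto)]
      rw [Finset.sum_congr rfl hterm, Finset.sum_ite_mem]
      have hss : Finset.Icc 1 T ∩ (Finset.Icc (r+1) T).filter (fun t => lam < p t ∧ p t ≤ tau)
          = (Finset.Icc (r+1) T).filter (fun t => lam < p t ∧ p t ≤ tau) := by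
        apply Finset.inter_eq_right.mpr
        intro x hx
        rw [Finset.mem_filter, Finset.mem_Icc] at hx
        rw [Finset.mem_Icc]
        omega
      rw [hss, ← Finset.mul_sum]
      calc _ ≤ δ ^ (T - r) * 1 := by
            apply mul_le_mul_of_nonneg_left _ (pow_nonneg hδ0.le _)
            exact gamma_candidate_sum p lam tau γ hγ_nonneg hγ_sum (r+1) T (by omega)
        _ = δ ^ (T - r) := mul_one _
    · rw [if_neg hJ]
      have hzero : ∀ t ∈ Finset.Icc 1 T, (if lam < p t ∧ p t ≤ tau then
          δ ^ (T - t) * addisTerm δ γ p lam tau t (rejTime R (j+1)) else 0) = 0 := by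
        intro t ht
        rw [Finset.mem_Icc] at ht
        cases hco : rejTime R (j+1) with
        | top =>
          have : addisTerm δ γ p lam tau t ⊤ = 0 := rfl
          rw [this, mul_zero, ite_self]
        | coe r =>
          have hrT : T ≤ r := by
            by_contra hcon
            push_neg at hcon
            apply hJ
            rw [hJdef, Finset.mem_filter]
            refine ⟨Finset.mem_range.mpr ?_, ?_⟩
            · have := hρ_ge j r hco; omega
            · rw [hco]; exact_mod_cast hcon
          rw [hterm_zero t r (by omega), mul_zero, ite_self]
      rw [Finset.sum_eq_zero hzero]
  -- aggregate the per-j bounds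
  have hS2 : ∑ j ∈ Finset.range T, (if j ∈ J then δ ^ (T - ρ j) * R (ρ j) else 0)
      ≤ ∑ t ∈ Finset.Icc 1 T, δ ^ (T - t) * R t := by
    rw [← Finset.sum_filter, Finset.filter_mem_eq_inter,
      Finset.inter_eq_right.mpr (by rw [hJdef]; exact Finset.filter_subset _ _)]
    have hinj : ∀ x ∈ J, ∀ y ∈ J, ρ x = ρ y → x = y := by
      intro x hx y hy hxy
      by_contra hne
      rcases Nat.lt_or_ge x y with h | h
      · exact hdist x y (ρ x) h (hJco x hx) (by rw [hxy]; exact hJco y hy)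
      · exact hdist y x (ρ x) (by omega) (by rw [hxy]; exact hJco y hy) (hJco x hx)
    rw [← Finset.sum_image (f := fun r => δ ^ (T - r) * R r) (g := ρ) hinj]
    apply Finset.sum_le_sum_of_subset_of_nonneg
    · intro r hr
      rw [Finset.mem_image] at hr
      obtain ⟨jj, hjj, rfl⟩ := hr
      rw [Finset.mem_Icc]
      exact ⟨hJ1 jj hjj, (hJlt jj hjj).le⟩
    · intro i _ _
      exact mul_nonneg (pow_nonneg hδ0.le _) (hR01 i).1
  -- termwise bound on the LHS
  have hBt : ∀ t ∈ Finset.Icc 1 T,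
      δ ^ (T - t) * A t * (if lam < p t ∧ p t ≤ tau then (1 : ℝ) else 0) / (tau - lam)
      ≤ α * ((if lam < p t ∧ p t ≤ tau then
          δ ^ (T - t) * γ' (candCount0 p lam tau t) else 0) * η
        + ∑ j ∈ Finset.range T, (if lam < p t ∧ p t ≤ tau then
            δ ^ (T - t) * addisTerm δ γ p lam tau t (rejTime R (j+1)) else 0)) := by
    intro t ht
    rw [Finset.mem_Icc] at ht
    by_cases hc : lam < p t ∧ p t ≤ tau
    · simp only [if_pos hc, mul_one]
      have hAle : A t ≤ α * (tau - lam) * (η * γ' (candCount0 p lam tau t)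
          + ∑ j ∈ Finset.range T, addisTerm δ γ p lam tau t (rejTime R (j+1))) := by
        rw [hA t, htsum t ht.2]
        exact min_le_left _ _
      have hstep : δ ^ (T - t) * A t / (tau - lam)
          ≤ δ ^ (T - t) * (α * (tau - lam) * (η * γ' (candCount0 p lam tau t)
          + ∑ j ∈ Finset.range T, addisTerm δ γ p lam tau t (rejTime R (j+1)))) / (tau - lam) := by
        gcongr
      calc δ ^ (T - t) * A t / (tau - lam) ≤ _ := hstep
        _ = α * (δ ^ (T - t) * γ' (candCount0 p lam tau t) * η
            + ∑ j ∈ Finset.range T, δ ^ (T - t) * addisTerm δ γ p lam tau t (rejTime R (j+1))) := by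
          rw [← Finset.mul_sum]
          field_simp
    · simp only [if_neg hc, mul_zero, zero_div, zero_mul, Finset.sum_const_zero, add_zero]
      positivity
  calc ∑ t ∈ Finset.Icc 1 T,
      δ ^ (T - t) * A t * (if lam < p t ∧ p t ≤ tau then (1 : ℝ) else 0) / (tau - lam)
      ≤ ∑ t ∈ Finset.Icc 1 T, α * ((if lam < p t ∧ p t ≤ tau then
          δ ^ (T - t) * γ' (candCount0 p lam tau t) else 0) * η
        + ∑ j ∈ Finset.range T, (if lam < p t ∧ p t ≤ tau then
            δ ^ (T - t) * addisTerm δ γ p lam tau t (rejTime R (j+1)) else 0)) :=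
        Finset.sum_le_sum hBt
    _ = α * ((∑ t ∈ Finset.Icc 1 T, (if lam < p t ∧ p t ≤ tau then
          δ ^ (T - t) * γ' (candCount0 p lam tau t) else 0)) * η
        + ∑ j ∈ Finset.range T, ∑ t ∈ Finset.Icc 1 T, (if lam < p t ∧ p t ≤ tau then
            δ ^ (T - t) * addisTerm δ γ p lam tau t (rejTime R (j+1)) else 0)) := by
        rw [← Finset.mul_sum, Finset.sum_add_distrib, Finset.sum_mul, Finset.sum_comm]
    _ ≤ α * (1 * η + ∑ t ∈ Finset.Icc 1 T, δ ^ (T - t) * R t) := by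
        apply mul_le_mul_of_nonneg_left _ hα0.le
        apply add_le_add
        · apply mul_le_mul_of_nonneg_right _ hη.le
          exact gammaP_candidate_sum δ hδ0 hδ1 p lam tau γ' hγ'_pos hγ'_sum T
        · exact (Finset.sum_le_sum hInner).trans hS2
    _ = α * ((∑ t ∈ Finset.Icc 1 T, δ ^ (T - t) * R t) + η) := by ring
end
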